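/- Let L and K be closed subspaces of a complex Hilbert space H with L ∔ K = H. Then P_L − P_K is invertible in B(H), and the operator E := P_L (P_L − P_K)^{-1} is a continuous idempotent (E∘E = E) with range(E) = L and kernel(E) = K. -/

import Mathlib

/-- The orthogonal projection onto a closed subspace `S`, as an operator on `H`. -/
noncomputable def orthProj {H : Type*} [NormedAddCommGroup H] [InnerProductSpace ℂ H]
    [CompleteSpace H] (S : Submodule ℂ H) (hS : IsClosed (S : Set H)) : H →L[ℂ] H :=
  haveI : CompleteSpace S := hS.completeSpace_coe
  S.subtypeL ∘L S.orthogonalProjectionOnto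

/-- If `L ∔ K = H` for closed subspaces `L`, `K` of a complex Hilbert space, then
`P_L - P_K` is invertible and `E = P_L (P_L - P_K)⁻¹` is a continuous idempotent
with range `L` and kernel `K`. -/
theorem idempotent_of_complementary {H : Type*} [NormedAddCommGroup H]
    [InnerProductSpace ℂ H] [CompleteSpace H]
    (L K : Submodule ℂ H) (hL : IsClosed (L : Set H)) (hK : IsClosed (K : Set H))
    (h : IsCompl L K) :
    IsUnit (orthProj L hL - orthProj K hK) ∧
    ∀ E : H →L[ℂ] H,
      E = orthProj L hL * Ring.inverse (orthProj L hL - orthProj K hK) →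
        E ∘L E = E ∧ LinearMap.range (E : H →ₗ[ℂ] H) = L ∧ LinearMap.ker (E : H →ₗ[ℂ] H) = K := by
  haveI : CompleteSpace L := hL.completeSpace_coe
  haveI : CompleteSpace K := hK.completeSpace_coe
  set PL := orthProj L hL with hPLdef
  set PK := orthProj K hK with hPKdef
  set Q : H →L[ℂ] H := L.subtypeL ∘L (L.linearProjOfClosedCompl K h hL hK) with hQdef
  -- basic pointwise facts
  have hQcoe : ∀ x : H, Q x = ((L.projectionOnto K h x : L) : H) := fun x => rfl
  have hQmem : ∀ x : H, Q x ∈ L := fun x => (L.projectionOnto K h x).2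
  have hQL : ∀ x ∈ L, Q x = x := by
    intro x hx
    rw [hQcoe, Submodule.linearProjOfIsCompl_apply_left h ⟨x, hx⟩]
  have hQK : ∀ x ∈ K, Q x = 0 := by
    intro x hx
    rw [hQcoe, Submodule.linearProjOfIsCompl_apply_right' h hx,
      Submodule.coe_zero]
  have hsub : ∀ x : H, x - Q x ∈ K := by
    intro x
    have h0 : Q (x - Q x) = 0 := by
      rw [map_sub, hQL (Q x) (hQmem x), sub_self]
    rw [hQcoe] at h0
    exact (Submodule.linearProjOfIsCompl_apply_eq_zero_iff h).mp
      (Subtype.coe_injective (h0.trans (Submodule.coe_zero (p := L)).symm))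
  have hPLcoe : ∀ x : H, PL x = ((L.orthogonalProjectionOnto x : L) : H) := fun x => rfl
  have hPKcoe : ∀ x : H, PK x = ((K.orthogonalProjectionOnto x : K) : H) := fun x => rfl
  have hPLmem : ∀ x : H, PL x ∈ L := fun x => (L.orthogonalProjectionOnto x).2
  have hPKmem : ∀ x : H, PK x ∈ K := fun x => (K.orthogonalProjectionOnto x).2
  have hPLfix : ∀ x ∈ L, PL x = x := fun x hx => by
    rw [hPLcoe]; exact Submodule.starProjection_eq_self_iff.mpr hx
  have hPKfix : ∀ x ∈ K, PK x = x := fun x hx => by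
    rw [hPKcoe]; exact Submodule.starProjection_eq_self_iff.mpr hx
  -- operator identities
  have h1 : PL * Q = Q := by
    ext x; exact hPLfix (Q x) (hQmem x)
  have h2 : Q * PL = PL := by
    ext x; exact hQL (PL x) (hPLmem x)
  have h3 : Q * PK = 0 := by
    ext x; exact hQK (PK x) (hPKmem x)
  have h4 : PK * Q = PK - 1 + Q := by
    ext x
    have : PK (x - Q x) = x - Q x := hPKfix _ (hsub x)
    simp only [ContinuousLinearMap.mul_apply, ContinuousLinearMap.add_apply,
      ContinuousLinearMap.sub_apply, ContinuousLinearMap.one_apply] at this ⊢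
    rw [map_sub] at this
    linear_combination (norm := abel) -this
  -- self-adjointness
  have hLsa : star PL = PL := (isSelfAdjoint_starProjection L).star_eq
  have hKsa : star PK = PK := (isSelfAdjoint_starProjection K).star_eq
  have h1' : PL * star Q = PL := by
    have := congrArg star h2
    rwa [star_mul, hLsa] at this
  have h3' : PK * star Q = 0 := by
    have := congrArg star h3
    rwa [star_mul, hKsa, star_zero] at this
  have h2' : star Q * PL = star Q := by
    have := congrArg star h1
    rwa [star_mul, hLsa] at this
  have h4' : star Q * PK = PK - 1 + star Q := by
    have := congrArg star h4
    rwa [star_mul, hKsa, star_add, star_sub, star_one, hKsa] at this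
  set S : H →L[ℂ] H := Q + star Q - 1 with hSdef
  have hTS : (PL - PK) * S = 1 := by
    simp only [hSdef, mul_sub, mul_add, sub_mul, add_mul, mul_one, one_mul]
    rw [h1, h1', h4, h3']
    abel
  have hST : S * (PL - PK) = 1 := by
    simp only [hSdef, mul_sub, mul_add, sub_mul, add_mul, mul_one, one_mul]
    rw [h2, h2', h3, h4']
    abel
  set u : (H →L[ℂ] H)ˣ := ⟨PL - PK, S, hTS, hST⟩ with hu
  refine ⟨⟨u, rfl⟩, ?_⟩
  intro E hE
  have hinv : Ring.inverse (PL - PK) = S := by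
    have : Ring.inverse (u : H →L[ℂ] H) = ((u⁻¹ : (H →L[ℂ] H)ˣ) : H →L[ℂ] H) :=
      Ring.inverse_unit u
    simpa [hu] using this
  have hEQ : E = Q := by
    simp only [hE, hinv, hSdef, mul_sub, mul_add, mul_one]
    rw [h1, h1']
    abel
  subst hEQ
  refine ⟨?_, ?_, ?_⟩
  · ext x
    exact hQL (Q x) (hQmem x)
  · apply le_antisymm
    · rintro y ⟨x, rfl⟩
      exact hQmem x
    · intro y hy
      exact ⟨y, hQL y hy⟩
  · ext x
    simp only [LinearMap.mem_ker, ContinuousLinearMap.coe_coe]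
    constructor
    · intro hx
      have := hsub x
      rwa [hx, sub_zero] at this
    · exact hQK x
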